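/- Let 2 ≤ c, o ≤ N be vehicle indices, let m = min(c,o), and let M_{c,o} be the principal submatrix of the reduced Laplacian L̄ obtained by deleting the rows and columns corresponding to all vehicles m, m+1, …, max(c,o) (the vehicles on the path between c and o). Define the steady-state gain T_{c,o}(0) = w_{c,o} · det(M_{c,o}) / det(L̄). Then T_{c,o}(0) = w_{c,o}·(1 + Σ_{i=1}^{c−2} ∏_{j=1}^{i} ε_{c−j}) if c ≤ o, and T_{c,o}(0) = w_{c,o}·(1 + Σ_{i=1}^{o−2} ∏_{j=1}^{i} ε_{o−j}) if o < c. -/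

import Mathlib

/-- The platoon Laplacian: an `N × N` real matrix (rows/columns `0, …, N-1`
correspond to vehicles `1, …, N`). -/
def platoonL (N : ℕ) (ε : ℕ → ℝ) : Matrix (Fin N) (Fin N) ℝ :=
  fun i j =>
    if i.val = 0 then 0
    else if i.val = N - 1 then
      (if j.val = N - 2 then -1 else if j = i then 1 else 0)
    else
      if j.val = i.val - 1 then -1
      else if j = i then 1 + ε (i.val + 1)
      else if j.val = i.val + 1 then -(ε (i.val + 1))
      else 0

/-- The reduced Laplacian: the platoon Laplacian with its first row and first
column deleted. Its index `i : Fin (N-1)` corresponds to vehicle `i + 2`. -/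
def reducedL (N : ℕ) (ε : ℕ → ℝ) : Matrix (Fin (N - 1)) (Fin (N - 1)) ℝ :=
  (platoonL N ε).submatrix
    (fun i => ⟨i.val + 1, by have := i.isLt; omega⟩)
    (fun i => ⟨i.val + 1, by have := i.isLt; omega⟩)

/-- Path weight: `1` if `c ≤ o`, and `∏_{i=o}^{c-1} ε_i` if `c > o`. -/
noncomputable def pathWeight (ε : ℕ → ℝ) (c o : ℕ) : ℝ :=
  if c ≤ o then 1 else ∏ i ∈ Finset.Icc o (c - 1), ε i

/-- The principal submatrix of the reduced Laplacian obtained by deleting the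
rows and columns of all vehicles `min c o, …, max c o` (the vehicles on the
path between `c` and `o`; vehicle `v` corresponds to index `v - 2`). -/
def pathSub (N : ℕ) (ε : ℕ → ℝ) (c o : ℕ) :
    Matrix (Fin (N - 1 - (max c o - min c o + 1)))
      (Fin (N - 1 - (max c o - min c o + 1))) ℝ :=
  (reducedL N ε).submatrix
    (fun i => if i.val < min c o - 2 then ⟨i.val, by have := i.isLt; omega⟩
      else ⟨i.val + (max c o - min c o + 1), by have := i.isLt; omega⟩)
    (fun i => if i.val < min c o - 2 then ⟨i.val, by have := i.isLt; omega⟩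
      else ⟨i.val + (max c o - min c o + 1), by have := i.isLt; omega⟩)

/-! ### Auxiliary machinery: tridiagonal matrices and continuants -/

/-- A tridiagonal matrix with data read off from `ℕ`-indexed functions,
with offset `s`. -/
def triMat (d u l : ℕ → ℝ) (s n : ℕ) : Matrix (Fin n) (Fin n) ℝ :=
  fun i j =>
    if (i : ℕ) = j then d (s + i)
    else if (i : ℕ) + 1 = j then u (s + i)
    else if (j : ℕ) + 1 = i then l (s + j)
    else 0

/-- The continuant (tridiagonal determinant recursion). -/
noncomputable def cont (d u l : ℕ → ℝ) : ℕ → ℕ → ℝ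
  | _, 0 => 1
  | s, 1 => d s
  | s, (n+2) => d s * cont d u l (s+1) (n+1) - u s * l s * cont d u l (s+2) n
  termination_by _ n => n

lemma cont_zero (d u l : ℕ → ℝ) (s : ℕ) : cont d u l s 0 = 1 := by simp [cont]
lemma cont_one (d u l : ℕ → ℝ) (s : ℕ) : cont d u l s 1 = d s := by simp [cont]
lemma cont_step (d u l : ℕ → ℝ) (s n : ℕ) :
    cont d u l s (n+2) = d s * cont d u l (s+1) (n+1) - u s * l s * cont d u l (s+2) n := by
  rw [cont]

lemma succAbove_one_val {n : ℕ} (k : Fin (n+1)) :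
    (((1 : Fin (n+2)).succAbove k) : ℕ) = if (k:ℕ) < 1 then (k:ℕ) else (k:ℕ)+1 := by
  simp [Fin.succAbove, Fin.lt_def]
  split_ifs <;> simp_all <;> omega

lemma tmshift (d u l : ℕ → ℝ) (s n : ℕ) :
    (triMat d u l s (n+2)).submatrix (Fin.succAbove 0) Fin.succ = triMat d u l (s+1) (n+1) := by
  funext i j
  simp only [Matrix.submatrix_apply, Fin.succAbove_zero, triMat, Fin.val_succ]
  split_ifs <;> first | rfl | (congr 1; omega) | omega | simp_all

lemma det_triMat (d u l : ℕ → ℝ) : ∀ n s, (triMat d u l s n).det = cont d u l s n := by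
  intro n
  induction n using Nat.strong_induction_on with
  | _ n ih =>
    match n with
    | 0 => intro s; simp [cont, Matrix.det_fin_zero]
    | 1 => intro s; simp [cont, Matrix.det_fin_one, triMat]
    | (n+2) =>
      intro s
      rw [Matrix.det_succ_column_zero, Fin.sum_univ_succ, Fin.sum_univ_succ]
      have hz : ∀ i : Fin n, triMat d u l s (n+2) i.succ.succ 0 = 0 := by
        intro i
        simp only [triMat, Fin.val_succ, Fin.val_zero]
        split_ifs <;> first | rfl | omega | simp_all
      have h00 : triMat d u l s (n+2) 0 0 = d s := by
        simp [triMat]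
      have h10 : triMat d u l s (n+2) 1 0 = l s := by
        simp only [triMat, Fin.val_zero, Fin.val_one]
        norm_num
      have hB : ((triMat d u l s (n+2)).submatrix (Fin.succAbove 1) Fin.succ).det
          = u s * cont d u l (s+2) n := by
        rw [Matrix.det_succ_row_zero, Fin.sum_univ_succ]
        have hrow : ∀ j : Fin n,
            ((triMat d u l s (n+2)).submatrix (Fin.succAbove 1) Fin.succ) 0 j.succ = 0 := by
          intro j
          simp only [Matrix.submatrix_apply, triMat, Fin.val_succ, succAbove_one_val, Fin.val_zero]
          norm_num
        have h0 : ((triMat d u l s (n+2)).submatrix (Fin.succAbove 1) Fin.succ) 0 0 = u s := by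
          simp only [Matrix.submatrix_apply, triMat, Fin.val_succ, succAbove_one_val, Fin.val_zero]
          norm_num
        have hsub : (((triMat d u l s (n+2)).submatrix (Fin.succAbove 1) Fin.succ).submatrix
            Fin.succ (Fin.succAbove 0)) = triMat d u l (s+2) n := by
          funext i j
          simp only [Matrix.submatrix_apply, Fin.succAbove_zero, triMat, Fin.val_succ,
            succAbove_one_val]
          norm_num
          split_ifs <;> first | rfl | (congr 1; omega) | omega | simp_all
        simp only [hrow, h0, hsub, Fin.val_zero, pow_zero, one_mul, mul_zero, zero_mul,
          Finset.sum_const_zero, add_zero]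
        rw [ih n (by omega) (s+2)]
      simp only [hz, zero_mul, mul_zero, Finset.sum_const_zero, add_zero, h00, h10,
        Fin.succ_zero_eq_one, Fin.val_zero, Fin.val_one, pow_zero, pow_one, one_mul,
        tmshift, hB, ih (n+1) (by omega) (s+1)]
      show d s * cont d u l (s+1) (n+1) + -1 * l s * (u s * cont d u l (s+2) n) = _
      rw [cont]
      ring

/-- splitting across a zero coupling -/
lemma cont_split (d u l : ℕ → ℝ) :
    ∀ p s q, 1 ≤ p → u (s+p-1) * l (s+p-1) = 0 →
      cont d u l s (p+q) = cont d u l s p * cont d u l (s+p) q := by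
  intro p
  induction p using Nat.strong_induction_on with
  | _ p ih =>
    match p with
    | 0 => intro s q h; omega
    | 1 =>
      intro s q _ h0
      simp only [Nat.add_sub_cancel] at h0
      match q with
      | 0 => simp [cont]
      | (q'+1) =>
        rw [show 1 + (q'+1) = q'+2 from by omega, cont_step, h0, cont_one]
        simp
    | 2 =>
      intro s q _ h0
      rw [show s+2-1 = s+1 from by omega] at h0
      match q with
      | 0 => simp [cont]
      | (q'+1) =>
        rw [show 2 + (q'+1) = (q'+1)+2 from by omega, cont_step d u l s (q'+1)]
        have h1 : cont d u l (s+1) (q'+2) = d (s+1) * cont d u l (s+2) (q'+1) := by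
          have h2 := ih 1 (by omega) (s+1) (q'+1) (by omega) (by simpa using h0)
          rw [show 1+(q'+1) = q'+2 from by omega] at h2
          rw [h2, cont_one]
        rw [show q'+1+1 = q'+2 from by omega, h1,
          show (2:ℕ) = 0+2 from by omega, cont_step d u l s 0, cont_one, cont_zero]
        rw [show 0+2 = 2 from by omega, show s+(0+2) = s+2 from by omega]
        ring
    | (p'+3) =>
      intro s q hp h0
      rw [show p'+3+q = (p'+1+q)+2 from by omega, cont_step d u l s (p'+1+q)]
      have hA := ih (p'+2) (by omega) (s+1) q (by omega)
        (by rw [show s+1+(p'+2)-1 = s+(p'+3)-1 from by omega]; exact h0)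
      have hB := ih (p'+1) (by omega) (s+2) q (by omega)
        (by rw [show s+2+(p'+1)-1 = s+(p'+3)-1 from by omega]; exact h0)
      rw [show p'+1+q+1 = p'+2+q from by omega, hA, hB]
      rw [show p'+3 = p'+1+2 from by omega, cont_step d u l s (p'+1)]
      rw [show p'+1+1 = p'+2 from by omega, show s+(p'+1+2) = s+1+(p'+2) from by omega,
        show s+2+(p'+1) = s+1+(p'+2) from by omega]
      ring

/-- value of a "grounded" block : all diag `1+a` except last diag `1`, couplings `a`. -/
lemma cont_eq_one (d u l a : ℕ → ℝ) :
    ∀ n s, (∀ i, s ≤ i → i+1 < s+n → d i = 1 + a i) → (1 ≤ n → d (s+n-1) = 1) →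
      (∀ i, s ≤ i → i+1 < s+n → u i * l i = a i) → cont d u l s n = 1 := by
  intro n
  induction n using Nat.strong_induction_on with
  | _ n ih =>
    match n with
    | 0 => intro s _ _ _; exact cont_zero d u l s
    | 1 =>
      intro s _ hlast _
      rw [cont_one]
      simpa using hlast (by omega)
    | (n+2) =>
      intro s hd hlast hul
      rw [cont_step, hd s (by omega) (by omega), hul s (by omega) (by omega)]
      rw [ih (n+1) (by omega) (s+1) (fun i h1 h2 => hd i (by omega) (by omega))
        (fun _ => by rw [show s+1+(n+1)-1 = s+(n+2)-1 from by omega]; exact hlast (by omega))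
        (fun i h1 h2 => hul i (by omega) (by omega))]
      rw [ih n (by omega) (s+2) (fun i h1 h2 => hd i (by omega) (by omega))
        (fun hn => by rw [show s+2+n-1 = s+(n+2)-1 from by omega]; exact hlast (by omega))
        (fun i h1 h2 => hul i (by omega) (by omega))]
      ring

/-- suffix-product continuant value -/
noncomputable def contG (a : ℕ → ℝ) (s n : ℕ) : ℝ :=
  ∑ i ∈ Finset.range (n+1), ∏ j ∈ Finset.range i, a (s + n - 1 - j)

lemma contG_zero (a : ℕ → ℝ) (s : ℕ) : contG a s 0 = 1 := by simp [contG]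

lemma contG_one (a : ℕ → ℝ) (s : ℕ) : contG a s 1 = 1 + a s := by
  simp [contG, Finset.sum_range_succ]

lemma contG_key (a : ℕ → ℝ) (s n : ℕ) :
    contG a s (n+1) = contG a (s+1) n + ∏ j ∈ Finset.range (n+1), a (s + n - j) := by
  rw [contG, Finset.sum_range_succ, contG]
  have e1 : ∀ j:ℕ, s+(n+1)-1-j = s+n-j := fun j => by omega
  have e2 : ∀ j:ℕ, s+1+n-1-j = s+n-j := fun j => by omega
  simp only [e1, e2]

lemma contG_step (a : ℕ → ℝ) (s n : ℕ) :
    (1 + a s) * contG a (s+1) (n+1) - a s * contG a (s+2) n = contG a s (n+2) := by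
  have k1 : contG a s (n+2) = contG a (s+1) (n+1) + ∏ j ∈ Finset.range (n+2), a (s+(n+1)-j) := by
    rw [show (n+2) = (n+1)+1 from rfl, contG_key]
  have k2 : contG a (s+1) (n+1) = contG a (s+2) n + ∏ j ∈ Finset.range (n+1), a (s+1+n-j) :=
    contG_key a (s+1) n
  have k3 : ∏ j ∈ Finset.range (n+2), a (s+(n+1)-j)
      = (∏ j ∈ Finset.range (n+1), a (s+1+n-j)) * a s := by
    rw [Finset.prod_range_succ]
    have e1 : ∀ j:ℕ, s+(n+1)-j = s+1+n-j := fun j => by omega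
    have e3 : s+1+n-(n+1) = s := by omega
    simp only [e1, e3]
  rw [k1, k2, k3]
  ring

/-- value of a top-type block: all diag `1+a`, couplings `a`. -/
lemma cont_eq_contG (d u l a : ℕ → ℝ) :
    ∀ n s, (∀ i, s ≤ i → i < s+n → d i = 1 + a i) →
      (∀ i, s ≤ i → i+1 < s+n → u i * l i = a i) → cont d u l s n = contG a s n := by
  intro n
  induction n using Nat.strong_induction_on with
  | _ n ih =>
    match n with
    | 0 => intro s _ _; rw [cont_zero, contG_zero]
    | 1 =>
      intro s hd _
      rw [cont_one, contG_one, hd s (by omega) (by omega)]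
    | (n+2) =>
      intro s hd hul
      rw [cont_step, hd s (by omega) (by omega), hul s (by omega) (by omega)]
      rw [ih (n+1) (by omega) (s+1) (fun i h1 h2 => hd i (by omega) (by omega))
        (fun i h1 h2 => hul i (by omega) (by omega))]
      rw [ih n (by omega) (s+2) (fun i h1 h2 => hd i (by omega) (by omega))
        (fun i h1 h2 => hul i (by omega) (by omega))]
      exact contG_step a s n

lemma contG_eq_sum (ε : ℕ → ℝ) (m : ℕ) (hm : 2 ≤ m) :
    contG (fun i => ε (i+2)) 0 (m-2)
      = 1 + ∑ i ∈ Finset.Icc 1 (m-2), ∏ j ∈ Finset.Icc 1 i, ε (m-j) := by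
  obtain ⟨t, rfl⟩ : ∃ t, m = t+2 := ⟨m-2, by omega⟩
  simp only [Nat.add_sub_cancel]
  rw [contG, Finset.sum_range_succ']
  rw [show (∏ j ∈ Finset.range 0, ε (0 + t - 1 - j + 2)) = 1 from by simp]
  rw [add_comm]
  congr 1
  rw [← Finset.Ico_add_one_right_eq_Icc, Finset.sum_Ico_eq_sum_range]
  simp only [Nat.add_sub_cancel]
  apply Finset.sum_congr rfl
  intro i hi
  simp only [Finset.mem_range] at hi
  rw [show 1+i = i+1 from by omega, ← Finset.Ico_add_one_right_eq_Icc, Finset.prod_Ico_eq_prod_range]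
  simp only [Nat.add_sub_cancel]
  apply Finset.prod_congr rfl
  intro j hj
  simp only [Finset.mem_range] at hj
  congr 1
  omega

/-! ### Identifying the concrete matrices -/

lemma reducedL_eq (N : ℕ) (hN : 2 ≤ N) (ε : ℕ → ℝ) :
    reducedL N ε = triMat (fun i => if i = N-2 then 1 else 1 + ε (i+2))
      (fun i => -(ε (i+2))) (fun _ => -1) 0 (N-1) := by
  funext i j
  have hi := i.isLt
  have hj := j.isLt
  simp only [reducedL, Matrix.submatrix_apply, platoonL, triMat, Fin.mk.injEq, Fin.ext_iff,
    Nat.zero_add]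
  split_ifs <;> first | rfl | omega | (congr 1; omega) | simp_all

def rr (t g i : ℕ) : ℕ := if i < t then i else i + g

set_option maxHeartbeats 2000000 in
lemma submatrix_triMat (d u l : ℕ → ℝ) (n n' t g : ℕ) (hg : 1 ≤ g)
    (f : Fin n' → Fin n) (hf : ∀ i, (f i : ℕ) = rr t g (i : ℕ)) :
    (triMat d u l 0 n).submatrix f f =
      triMat (fun i => d (rr t g i))
        (fun i => if rr t g (i+1) = rr t g i + 1 then u (rr t g i) else 0)
        (fun i => if rr t g (i+1) = rr t g i + 1 then l (rr t g i) else 0) 0 n' := by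
  funext i j
  simp only [Matrix.submatrix_apply, triMat, hf, Nat.zero_add, rr]
  split_ifs <;> first | rfl | omega | (congr 1; omega) | simp_all

lemma reducedL_det (N : ℕ) (hN : 2 ≤ N) (ε : ℕ → ℝ) : (reducedL N ε).det = 1 := by
  rw [reducedL_eq N hN ε, det_triMat]
  apply cont_eq_one _ _ _ (fun i => ε (i+2)) (N-1) 0
  · intro i h1 h2
    rw [if_neg (by omega)]
  · intro h
    rw [if_pos (by omega)]
  · intro i h1 h2
    ring

set_option maxHeartbeats 4000000 in
lemma pathSub_eq (N : ℕ) (hN : 2 ≤ N) (ε : ℕ → ℝ) (c o : ℕ) :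
    pathSub N ε c o =
      triMat
        (fun i => if rr (min c o - 2) (max c o - min c o + 1) i = N-2 then 1
          else 1 + ε (rr (min c o - 2) (max c o - min c o + 1) i + 2))
        (fun i => if rr (min c o - 2) (max c o - min c o + 1) (i+1)
            = rr (min c o - 2) (max c o - min c o + 1) i + 1 then
          -(ε (rr (min c o - 2) (max c o - min c o + 1) i + 2)) else 0)
        (fun i => if rr (min c o - 2) (max c o - min c o + 1) (i+1)
            = rr (min c o - 2) (max c o - min c o + 1) i + 1 then (-1 : ℝ) else 0)
        0 (N - 1 - (max c o - min c o + 1)) := by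
  funext i j
  have hi := i.isLt
  have hj := j.isLt
  rw [pathSub, reducedL_eq N hN ε]
  simp only [Matrix.submatrix_apply, triMat, rr, apply_ite (Fin.val), Nat.zero_add]
  split_ifs <;> first | rfl | omega | (congr 1; omega) | simp_all

lemma pathSub_det (N : ℕ) (hN : 2 ≤ N) (ε : ℕ → ℝ) (c o : ℕ)
    (hc2 : 2 ≤ c) (hcN : c ≤ N) (ho2 : 2 ≤ o) (hoN : o ≤ N) :
    (pathSub N ε c o).det = contG (fun i => ε (i+2)) 0 (min c o - 2) := by
  have hm2 : 2 ≤ min c o := le_min hc2 ho2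
  have hmM : min c o ≤ max c o := min_le_max
  have hMN : max c o ≤ N := max_le hcN hoN
  rw [pathSub_eq N hN ε c o, det_triMat]
  set t := min c o - 2 with ht
  set g := max c o - min c o + 1 with hgdef
  have hg1 : 1 ≤ g := by omega
  have htn : t ≤ N - 1 - g := by omega
  by_cases ht1 : 1 ≤ t
  · rw [show N-1-g = t + (N-1-g-t) from by omega]
    rw [cont_split _ _ _ t 0 (N-1-g-t) ht1 (by
      simp only [rr]
      split_ifs <;> first | ring1 | (exfalso; omega))]
    rw [cont_eq_contG _ _ _ (fun i => ε (i+2)) t 0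
      (by intro i hi1 hi2
          simp only [rr]
          split_ifs <;> first | rfl | (exfalso; omega) | (congr 1; omega))
      (by intro i hi1 hi2
          simp only [rr]
          split_ifs <;> first | ring1 | (exfalso; omega) | (ring_nf; congr 1; omega))]
    rw [cont_eq_one _ _ _ (fun i => ε (i+g+2)) (N-1-g-t) (0+t)
      (by intro i hi1 hi2
          simp only [rr]
          split_ifs <;> first | rfl | (exfalso; omega) | (congr 1; omega))
      (by intro hq
          simp only [rr]
          split_ifs <;> first | rfl | (exfalso; omega))
      (by intro i hi1 hi2
          simp only [rr]
          split_ifs <;> first | ring1 | (exfalso; omega) | (ring_nf; congr 1; omega))]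
    rw [mul_one]
  · rw [show t = 0 from by omega, contG_zero]
    have ht0 : t = 0 := by omega
    rw [cont_eq_one _ _ _ (fun i => ε (i+g+2)) (N-1-g) 0
      (by intro i hi1 hi2
          simp only [rr]
          split_ifs <;> first | rfl | (exfalso; omega) | (congr 1; omega))
      (by intro hq
          simp only [rr]
          split_ifs <;> first | rfl | (exfalso; omega))
      (by intro i hi1 hi2
          simp only [rr]
          split_ifs <;> first | ring1 | (exfalso; omega) | (ring_nf; congr 1; omega))]

/-- The steady-state gain `T_{c,o}(0) = w_{c,o} · det(M_{c,o}) / det(L̄)`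
equals `w_{c,o}·(1 + Σ_{i=1}^{m-2} ∏_{j=1}^{i} ε_{m-j})`, where `m = min c o`. -/
theorem platoon_steady_state_gain
    (N : ℕ) (hN : 2 ≤ N) (ε : ℕ → ℝ)
    (hε : ∀ i, 2 ≤ i → i ≤ N - 1 → 0 ≤ ε i)
    (c o : ℕ) (hc2 : 2 ≤ c) (hcN : c ≤ N) (ho2 : 2 ≤ o) (hoN : o ≤ N) :
    pathWeight ε c o * (pathSub N ε c o).det / (reducedL N ε).det =
      if c ≤ o then
        pathWeight ε c o *
          (1 + ∑ i ∈ Finset.Icc 1 (c - 2), ∏ j ∈ Finset.Icc 1 i, ε (c - j))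
      else
        pathWeight ε c o *
          (1 + ∑ i ∈ Finset.Icc 1 (o - 2), ∏ j ∈ Finset.Icc 1 i, ε (o - j)) := by
  rw [reducedL_det N hN ε, pathSub_det N hN ε c o hc2 hcN ho2 hoN, div_one,
    contG_eq_sum ε (min c o) (le_min hc2 ho2)]
  by_cases hco : c ≤ o
  · rw [if_pos hco, min_eq_left hco]
  · rw [if_neg hco, min_eq_right (by omega : o ≤ c)]
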